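/- Let A = Z/(p^{α₁}) × ⋯ × Z/(p^{α_m}) with 1 ≤ α₁ ≤ ⋯ ≤ α_m. If M ∈ Aut(A) has order a power of p, then (M − Id)^m = p·N for some endomorphism N of A. -/

import Mathlib

open Submodule Module

private lemma nsmul_mod {A : Type*} [AddCommMonoid A] (n c : ℕ) (a : A) (h : n • a = 0) :
    (c % n) • a = c • a := by
  conv_rhs => rw [← Nat.div_add_mod c n]
  rw [add_nsmul, mul_nsmul, h, smul_zero, zero_add]

private lemma key {A : Type*} [AddCommGroup A] {p k m t : ℕ} (hp : p.Prime)
    (M : AddAut A) (hM : (p ^ k) • M = 0)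
    (g : Fin m → A)
    (hspan : ∀ x : A, p ^ t • x = 0 → x ∈ Submodule.span ℤ (Set.range g))
    (hg : ∀ i, p ^ t • g i = 0)
    (x : A) (hx : p ^ t • x = 0) :
    ∃ y : A, p ^ t • y = 0 ∧
      (((show AddMonoid.End A from M.toAddMonoidHom) - 1) ^ m) x = p • y := by
  haveI := Fact.mk hp
  haveI : NeZero p := ⟨hp.ne_zero⟩
  have emul : ∀ (f g : AddMonoid.End A) (a : A), (f * g) a = f (g a) := fun _ _ _ => rfl
  set S : Submodule ℤ A := Submodule.span ℤ (Set.range g) with hSdef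
  have hStor : ∀ z ∈ S, p ^ t • z = 0 := by
    intro z hz
    induction hz using Submodule.span_induction with
    | mem _ h => obtain ⟨i, rfl⟩ := h; exact hg i
    | zero => simp
    | add a b _ _ ha hb => rw [smul_add, ha, hb, add_zero]
    | smul c a _ ha => rw [smul_comm, ha, smul_zero]
  set EE : AddMonoid.End A := (show AddMonoid.End A from M.toAddMonoidHom) with hEE
  set ML : A →ₗ[ℤ] A := M.toAddMonoidHom.toIntLinearMap with hML
  have hMS : ∀ z ∈ S, ML z ∈ S := by
    intro z hz
    apply hspan
    have h1 : M.toAddMonoidHom (p ^ t • z) = 0 := by rw [hStor z hz, map_zero]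
    rw [map_nsmul] at h1
    exact h1
  set MS : S →ₗ[ℤ] S := ML.restrict hMS with hMSdef
  set P : Submodule ℤ S := LinearMap.range ((p : ℤ) • (LinearMap.id : S →ₗ[ℤ] S)) with hPdef
  have hPmem : ∀ z : S, ((p : ℤ) • z) ∈ P := fun z => ⟨z, by simp⟩
  have hPle : P ≤ P.comap MS := by
    rintro z ⟨u, rfl⟩
    simp only [LinearMap.smul_apply, LinearMap.id_apply, Submodule.mem_comap, map_smul]
    exact hPmem _
  set T0 : (S ⧸ P) →ₗ[ℤ] (S ⧸ P) := P.mapQ P MS hPle with hT0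
  have hW : ∀ w : S ⧸ P, p • w = 0 := by
    intro w
    obtain ⟨z, rfl⟩ := P.mkQ_surjective w
    rw [← map_nsmul, Submodule.mkQ_apply, Submodule.Quotient.mk_eq_zero]
    have h2 : (p : ℕ) • z = (p : ℤ) • z := by rw [natCast_zsmul]
    rw [h2]
    exact hPmem z
  haveI instW : Module (ZMod p) (S ⧸ P) := AddCommGroup.zmodModule hW
  have hsmul : ∀ (c : ZMod p) (w : S ⧸ P), c • w = (c.val : ℤ) • w := by
    intro c w
    have h3 : ((c.val : ℤ) : ZMod p) • w = (c.val : ℤ) • w := Int.cast_smul_eq_zsmul (ZMod p) _ w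
    rw [← h3, Int.cast_natCast, ZMod.natCast_zmod_val]
  set T : Module.End (ZMod p) (S ⧸ P) :=
    { toFun := T0
      map_add' := map_add T0
      map_smul' := by
        intro c w
        simp only [RingHom.id_apply]
        rw [hsmul, hsmul, map_smul] } with hT
  have hTapp : ∀ z : S, T (P.mkQ z) = P.mkQ (MS z) := by
    intro z
    show T0 (P.mkQ z) = P.mkQ (MS z)
    rw [hT0, Submodule.mkQ_apply, Submodule.mapQ_apply, Submodule.mkQ_apply]
  -- bridges
  have bridge1 : ∀ (n : ℕ) (z : S), (((MS - 1) ^ n) z : A) = ((EE - 1) ^ n) (z : A) := by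
    intro n
    induction n with
    | zero => intro z; simp
    | succ n ih =>
      intro z
      have hstep : (((MS - 1) z : S) : A) = (EE - 1) (z : A) := rfl
      rw [pow_succ, pow_succ, Module.End.mul_apply, emul, ih ((MS - 1) z), hstep]
  have bridge2 : ∀ (n : ℕ) (z : S), ((MS ^ n) z : A) = (n • M) (z : A) := by
    intro n
    induction n with
    | zero => intro z; simp
    | succ n ih =>
      intro z
      have hstep : ((MS z : S) : A) = M (z : A) := rfl
      rw [pow_succ, succ_nsmul, Module.End.mul_apply, AddAut.add_apply, ih (MS z), hstep]
  have bridge4 : ∀ (n : ℕ) (z : S), ((T - 1) ^ n) (P.mkQ z) = P.mkQ (((MS - 1) ^ n) z) := by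
    intro n
    induction n with
    | zero => intro z; simp
    | succ n ih =>
      intro z
      have hstep : (T - 1) (P.mkQ z) = P.mkQ ((MS - 1) z) := by
        rw [LinearMap.sub_apply, LinearMap.sub_apply, hTapp, Module.End.one_apply,
          Module.End.one_apply, ← map_sub]
      rw [pow_succ, pow_succ, Module.End.mul_apply, Module.End.mul_apply, hstep, ih ((MS - 1) z)]
  have hTpow : T ^ (p ^ k) = 1 := by
    have bridge3 : ∀ (n : ℕ) (z : S), (T ^ n) (P.mkQ z) = P.mkQ ((MS ^ n) z) := by
      intro n
      induction n with
      | zero => intro z; simp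
      | succ n ih =>
        intro z
        rw [pow_succ, pow_succ, Module.End.mul_apply, Module.End.mul_apply, hTapp, ih (MS z)]
    apply LinearMap.ext
    intro w
    obtain ⟨z, rfl⟩ := P.mkQ_surjective w
    rw [bridge3, Module.End.one_apply]
    congr 1
    apply Subtype.ext
    rw [bridge2, hM]
    rfl
  have hpcast : ((p : ℕ) : Module.End (ZMod p) (S ⧸ P)) = 0 := by
    apply LinearMap.ext
    intro w
    rw [Module.End.natCast_apply, LinearMap.zero_apply]
    exact hW w
  obtain ⟨r, hr⟩ := (Commute.neg_one_right T).exists_add_pow_prime_pow_eq hp k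
  have hTT : (T - 1) ^ (p ^ k) = 0 := by
    rw [sub_eq_add_neg, hr, hTpow, hpcast, zero_mul, zero_mul, zero_mul, add_zero]
    rcases Nat.even_or_odd (p ^ k) with he | ho
    · have hp2 : p = 2 := by
        rcases hp.eq_two_or_odd' with h2 | hodd
        · exact h2
        · exact absurd (hodd.pow) (Nat.not_odd_iff_even.mpr he)
      have h2 : ((2 : ℕ) : Module.End (ZMod p) (S ⧸ P)) = 0 := hp2 ▸ hpcast
      rw [he.neg_one_pow, one_add_one_eq_two, ← Nat.cast_ofNat, h2]
    · rw [ho.neg_one_pow, add_neg_cancel]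
  -- finrank bound
  set gS : Fin m → S := fun i => ⟨g i, Submodule.subset_span ⟨i, rfl⟩⟩ with hgS
  have hspanS : ∀ z : S, z ∈ Submodule.span ℤ (Set.range gS) := by
    rintro ⟨z, hz⟩
    induction hz using Submodule.span_induction with
    | mem v h =>
      obtain ⟨i, rfl⟩ := h
      exact Submodule.subset_span ⟨i, rfl⟩
    | zero => exact Submodule.zero_mem _
    | add a b ha' hb' ha hb => exact Submodule.add_mem _ ha hb
    | smul c a ha' ha => exact Submodule.smul_mem _ c ha
  set g' : Fin m → (S ⧸ P) := fun i => P.mkQ (gS i) with hg'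
  have hspan' : Submodule.span (ZMod p) (Set.range g') = ⊤ := by
    rw [Submodule.eq_top_iff']
    intro w
    obtain ⟨z, rfl⟩ := P.mkQ_surjective w
    have hz := hspanS z
    induction hz using Submodule.span_induction with
    | mem v h =>
      obtain ⟨i, rfl⟩ := h
      exact Submodule.subset_span ⟨i, rfl⟩
    | zero => rw [map_zero]; exact Submodule.zero_mem _
    | add a b _ _ ha hb => rw [map_add]; exact Submodule.add_mem _ ha hb
    | smul c a _ ha =>
      rw [map_smul]
      have h4 : (c : ℤ) • (P.mkQ a) = ((c : ZMod p)) • (P.mkQ a) :=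
        (Int.cast_smul_eq_zsmul (ZMod p) c (P.mkQ a)).symm
      rw [h4]
      exact Submodule.smul_mem _ _ ha
  haveI : Module.Finite (ZMod p) (S ⧸ P) := ⟨hspan' ▸ Submodule.fg_span (Set.finite_range g')⟩
  have hfr : Module.finrank (ZMod p) (S ⧸ P) ≤ m := by
    have h1 := finrank_range_le_card (R := ZMod p) g'
    rwa [Set.finrank, hspan', finrank_top, Fintype.card_fin] at h1
  have hnilfr : (T - 1) ^ Module.finrank (ZMod p) (S ⧸ P) = 0 := by
    have hc := IsNilpotent.charpoly_eq_X_pow_finrank (⟨_, hTT⟩ : IsNilpotent (T - 1))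
    have ha := LinearMap.aeval_self_charpoly (T - 1)
    rw [hc, map_pow, Polynomial.aeval_X] at ha
    exact ha
  have hmzero : (T - 1) ^ m = 0 := by
    rw [← Nat.sub_add_cancel hfr, pow_add, hnilfr, mul_zero]
  have hxS : x ∈ S := hspan x hx
  have h0 : P.mkQ (((MS - 1) ^ m) ⟨x, hxS⟩) = 0 := by
    rw [← bridge4, hmzero, LinearMap.zero_apply]
  rw [Submodule.mkQ_apply, Submodule.Quotient.mk_eq_zero] at h0
  obtain ⟨u, hu⟩ := h0
  simp only [LinearMap.smul_apply, LinearMap.id_apply] at hu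
  refine ⟨(u : A), hStor _ u.2, ?_⟩
  rw [← bridge1 m ⟨x, hxS⟩, ← hu]
  show (((p : ℤ) • u : S) : A) = p • (u : A)
  rw [Submodule.coe_smul, natCast_zsmul]

/-- Let `A = Z/(p^{α₁}) × ⋯ × Z/(p^{α_m})` with `1 ≤ α₁ ≤ ⋯ ≤ α_m`. If
`M ∈ Aut(A)` has order a power of `p`, then `(M − Id)^m = p·N` for some endomorphism `N`
of `A` (the computation taking place in the endomorphism ring of `A`). -/
theorem stmt7 (p m : ℕ) (hp : p.Prime) (α : Fin m → ℕ)
    (hα1 : ∀ i, 1 ≤ α i) (hαmono : Monotone α)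
    (M : AddAut (∀ i : Fin m, ZMod (p ^ α i)))
    (k : ℕ) (hM : addOrderOf M = p ^ k) :
    ∃ N : AddMonoid.End (∀ i : Fin m, ZMod (p ^ α i)),
      ((show AddMonoid.End (∀ i : Fin m, ZMod (p ^ α i)) from M.toAddMonoidHom) - 1) ^ m
        = p • N := by
  haveI : ∀ i : Fin m, NeZero (p ^ α i) := fun i => ⟨pow_ne_zero _ hp.ne_zero⟩
  have hM1 : (p ^ k) • M = 0 := by rw [← hM]; exact addOrderOf_nsmul_eq_zero M
  have hkey : ∀ j : Fin m, ∃ y, p ^ α j • y = 0 ∧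
      (((show AddMonoid.End (∀ i : Fin m, ZMod (p ^ α i)) from M.toAddMonoidHom) - 1) ^ m)
        (Pi.single j (1 : ZMod (p ^ α j))) = p • y := by
    intro j
    apply key hp M hM1 (fun i => p ^ (α i - α j) • Pi.single i (1 : ZMod (p ^ α i)))
    · intro x hx
      rw [← Finset.univ_sum_single x]
      refine Submodule.sum_mem _ fun i _ => ?_
      have hxi : p ^ α j • x i = 0 := by
        have h4 := congrFun hx i
        rwa [Pi.smul_apply, Pi.zero_apply] at h4
      have hdvd1 : p ^ α i ∣ p ^ α j * (x i).val := by
        have h5 : ((p ^ α j * (x i).val : ℕ) : ZMod (p ^ α i)) = 0 := by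
          rw [Nat.cast_mul, ZMod.natCast_zmod_val, ← nsmul_eq_mul, hxi]
        exact (ZMod.natCast_eq_zero_iff _ _).mp h5
      have hdvd : p ^ (α i - α j) ∣ (x i).val := by
        rcases le_or_gt (α i) (α j) with hle | hlt
        · rw [Nat.sub_eq_zero_of_le hle, pow_zero]; exact one_dvd _
        · have h6 : p ^ α j * p ^ (α i - α j) ∣ p ^ α j * (x i).val := by
            rw [← pow_add, ← Nat.add_sub_assoc hlt.le, Nat.add_sub_cancel_left]
            exact hdvd1
          exact (Nat.mul_dvd_mul_iff_left (pow_pos hp.pos (α j))).mp h6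
      have hc : p ^ (α i - α j) * ((x i).val / p ^ (α i - α j)) = (x i).val :=
        Nat.mul_div_cancel' hdvd
      have heq : (Pi.single i (x i) : ∀ i' : Fin m, ZMod (p ^ α i'))
          = (((x i).val / p ^ (α i - α j) : ℕ) : ℤ) •
            (p ^ (α i - α j) • (Pi.single i (1 : ZMod (p ^ α i)) : ∀ i' : Fin m, ZMod (p ^ α i'))) := by
        rw [natCast_zsmul, smul_smul, ← Pi.single_smul, nsmul_eq_mul, mul_one,
          mul_comm ((x i).val / p ^ (α i - α j)) (p ^ (α i - α j)), hc, ZMod.natCast_zmod_val]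
      rw [heq]
      exact Submodule.smul_mem _ _ (Submodule.subset_span ⟨i, rfl⟩)
    · intro i
      rw [smul_smul, ← Pi.single_smul]
      have h7 : ((p ^ α j * p ^ (α i - α j)) • (1 : ZMod (p ^ α i))) = 0 := by
        rw [nsmul_eq_mul, mul_one, ← pow_add, ZMod.natCast_eq_zero_iff]
        exact pow_dvd_pow p le_add_tsub
      rw [h7, Pi.single_zero]
    · rw [← Pi.single_smul]
      have h8 : (p ^ α j • (1 : ZMod (p ^ α j))) = 0 := by
        rw [nsmul_eq_mul, mul_one, ZMod.natCast_self]
      rw [h8, Pi.single_zero]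
  choose n hn1 hn2 using hkey
  refine ⟨AddMonoidHom.mk' (fun x => ∑ j, (x j).val • n j) ?_, ?_⟩
  · intro x y
    rw [← Finset.sum_add_distrib]
    refine Finset.sum_congr rfl fun j _ => ?_
    rw [Pi.add_apply, ZMod.val_add, nsmul_mod _ _ _ (hn1 j), add_nsmul]
  · apply DFunLike.ext
    intro x
    show (((show AddMonoid.End (∀ i : Fin m, ZMod (p ^ α i)) from M.toAddMonoidHom) - 1) ^ m) x
      = p • ∑ j, (x j).val • n j
    have h8 : ∀ j : Fin m, (x j).val •
        (Pi.single j (1 : ZMod (p ^ α j)) : ∀ i : Fin m, ZMod (p ^ α i))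
        = (Pi.single j (x j) : ∀ i : Fin m, ZMod (p ^ α i)) := by
      intro j
      rw [← Pi.single_smul, nsmul_eq_mul, mul_one, ZMod.natCast_zmod_val]
    have h9 : ∀ j ∈ Finset.univ, p • ((x j).val • n j)
        = (((show AddMonoid.End (∀ i : Fin m, ZMod (p ^ α i)) from M.toAddMonoidHom) - 1) ^ m)
          ((Pi.single j (x j) : ∀ i : Fin m, ZMod (p ^ α i))) := by
      intro j _
      rw [smul_comm, ← hn2 j, ← map_nsmul, h8 j]
    rw [Finset.smul_sum, Finset.sum_congr rfl h9, ← map_sum, Finset.univ_sum_single]
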